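/- For every integer n ≥ 1, the number of Schröder paths of length 2n having no peak of odd height equals the number of UH-free Schröder paths of length 2n whose first step is U. -/

import Mathlib

/-- Steps of a Schröder path: `U = (1,1)`, `D = (1,-1)`, `H = H² = (2,0)`. -/
inductive SStep : Type
  | U : SStep
  | D : SStep
  | H : SStep
  deriving DecidableEq

/-- The contribution of a step to the x-coordinate. -/
def SStep.len : SStep → ℕ
  | U => 1
  | D => 1
  | H => 2

/-- The contribution of a step to the y-coordinate. -/
def SStep.eff : SStep → ℤ
  | U => 1
  | D => -1
  | H => 0

/-- The height (y-coordinate of the starting point) of the `i`-th step (0-indexed);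
for `i = L.length` this is the final height of the path. -/
def sHeight (L : List SStep) (i : ℕ) : ℤ := ((L.take i).map SStep.eff).sum

/-- `L` is a Schröder path of length `2 * n`: it has total horizontal displacement `2 * n`,
ends at height `0`, and never goes below the x-axis. -/
def IsSchroder (L : List SStep) (n : ℕ) : Prop :=
  (L.map SStep.len).sum = 2 * n ∧ (L.map SStep.eff).sum = 0 ∧ ∀ i, 0 ≤ sHeight L i

/-- A peak at position `i`: an up step immediately followed by a down step.
The height of this peak is `sHeight L (i+1)`, the height of its down step. -/
def IsPeakAt (L : List SStep) (i : ℕ) : Prop :=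
  L[i]? = some SStep.U ∧ L[i+1]? = some SStep.D

/-- `L` has no peak of odd height. -/
def NoOddPeak (L : List SStep) : Prop :=
  ∀ i, IsPeakAt L i → ¬ Odd (sHeight L (i+1))

/-- `L` has no peak of even height. -/
def NoEvenPeak (L : List SStep) : Prop :=
  ∀ i, IsPeakAt L i → ¬ Even (sHeight L (i+1))

/-- `L` is UH-free: no up step is immediately followed by a horizontal step. -/
def UHFree (L : List SStep) : Prop :=
  ∀ i, ¬ (L[i]? = some SStep.U ∧ L[i+1]? = some SStep.H)

/-- The number of peaks of `L` of even height greater than `2`. -/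
def evenHighPeaks (L : List SStep) : ℕ :=
  ((Finset.range L.length).filter
    (fun i => L[i]? = some SStep.U ∧ L[i+1]? = some SStep.D ∧
      Even (sHeight L (i+1)) ∧ 2 < sHeight L (i+1))).card

namespace SP
open SStep List Finset

instance : Fintype SStep :=
  ⟨{SStep.U, SStep.D, SStep.H}, by intro x; cases x <;> simp⟩

/-! ### basic sHeight lemmas -/

lemma sHeight_zero (L : List SStep) : sHeight L 0 = 0 := rfl

lemma sHeight_nil (i : ℕ) : sHeight [] i = 0 := by simp [sHeight]

lemma sHeight_cons (x : SStep) (L : List SStep) (i : ℕ) :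
    sHeight (x :: L) (i+1) = x.eff + sHeight L i := by
  simp [sHeight]

lemma sHeight_of_ge (L : List SStep) {i : ℕ} (h : L.length ≤ i) :
    sHeight L i = (L.map SStep.eff).sum := by
  simp [sHeight, List.take_of_length_le h]

lemma sHeight_succ (L : List SStep) (i : ℕ) (hi : i < L.length) :
    sHeight L (i+1) = sHeight L i + (L.get ⟨i, hi⟩).eff := by
  unfold sHeight
  rw [List.take_succ, List.getElem?_eq_getElem hi]
  rw [List.map_append, List.sum_append]
  simp

lemma sHeight_append_left (A B : List SStep) {i : ℕ} (h : i ≤ A.length) :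
    sHeight (A ++ B) i = sHeight A i := by
  simp [sHeight, List.take_append,
    Nat.sub_eq_zero_of_le h]

lemma sHeight_append_right (A B : List SStep) (i : ℕ) :
    sHeight (A ++ B) (A.length + i) = (A.map SStep.eff).sum + sHeight B i := by
  simp [sHeight, List.take_append, List.take_of_length_le (Nat.le_add_right _ _)]


/-! ### decidability -/

lemma length_le_lenSum (L : List SStep) : L.length ≤ (L.map SStep.len).sum := by
  induction L with
  | nil => simp
  | cons x t ih =>
    simp only [List.length_cons, List.map_cons, List.sum_cons]
    have : 1 ≤ x.len := by cases x <;> simp [SStep.len]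
    omega

lemma isSchroder_iff (L : List SStep) (n : ℕ) :
    IsSchroder L n ↔ (L.map SStep.len).sum = 2 * n ∧ (L.map SStep.eff).sum = 0 ∧
      ∀ i ∈ Finset.range (L.length + 1), 0 ≤ sHeight L i := by
  constructor
  · rintro ⟨h1, h2, h3⟩; exact ⟨h1, h2, fun i _ => h3 i⟩
  · rintro ⟨h1, h2, h3⟩
    refine ⟨h1, h2, fun i => ?_⟩
    rcases le_or_gt i L.length with h | h
    · exact h3 i (Finset.mem_range.2 (by omega))
    · rw [sHeight_of_ge L (le_of_lt h), h2]

instance (L : List SStep) (n : ℕ) : Decidable (IsSchroder L n) :=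
  decidable_of_iff' _ (isSchroder_iff L n)

instance (L : List SStep) (i : ℕ) : Decidable (IsPeakAt L i) := by
  unfold IsPeakAt; infer_instance

lemma noOddPeak_iff (L : List SStep) :
    NoOddPeak L ↔ ∀ i ∈ Finset.range L.length, IsPeakAt L i → ¬ Odd (sHeight L (i+1)) := by
  constructor
  · exact fun h i _ => h i
  · intro h i hp
    have : i + 1 < L.length := by
      by_contra hc
      have : L[i+1]? = none := by
        rw [List.getElem?_eq_none_iff]; omega
      rw [hp.2] at this; exact absurd this (by simp)
    exact h i (Finset.mem_range.2 (by omega)) hp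

lemma noEvenPeak_iff (L : List SStep) :
    NoEvenPeak L ↔ ∀ i ∈ Finset.range L.length, IsPeakAt L i → ¬ Even (sHeight L (i+1)) := by
  constructor
  · exact fun h i _ => h i
  · intro h i hp
    have : i + 1 < L.length := by
      by_contra hc
      have : L[i+1]? = none := by
        rw [List.getElem?_eq_none_iff]; omega
      rw [hp.2] at this; exact absurd this (by simp)
    exact h i (Finset.mem_range.2 (by omega)) hp

lemma uhFree_iff (L : List SStep) :
    UHFree L ↔ ∀ i ∈ Finset.range L.length, ¬ (L[i]? = some SStep.U ∧ L[i+1]? = some SStep.H) := by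
  constructor
  · exact fun h i _ => h i
  · intro h i hp
    have : i + 1 < L.length := by
      by_contra hc
      have : L[i+1]? = none := by
        rw [List.getElem?_eq_none_iff]; omega
      rw [hp.2] at this; exact absurd this (by simp)
    exact h i (Finset.mem_range.2 (by omega)) hp

instance : DecidablePred NoOddPeak := fun L => decidable_of_iff' _ (noOddPeak_iff L)
instance : DecidablePred NoEvenPeak := fun L => decidable_of_iff' _ (noEvenPeak_iff L)
instance : DecidablePred UHFree := fun L => decidable_of_iff' _ (uhFree_iff L)

/-! ### enumeration -/

def listsUpTo : ℕ → Finset (List SStep)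
  | 0 => {[]}
  | (m+1) => insert [] ((Finset.univ ×ˢ listsUpTo m).image (fun p => p.1 :: p.2))

lemma mem_listsUpTo (m : ℕ) (L : List SStep) : L ∈ listsUpTo m ↔ L.length ≤ m := by
  induction m generalizing L with
  | zero => cases L <;> simp [listsUpTo]
  | succ m ih =>
    cases L with
    | nil => simp [listsUpTo]
    | cons x t =>
      simp only [listsUpTo, Finset.mem_insert, Finset.mem_image, Finset.mem_product,
        Finset.mem_univ, true_and, Prod.exists, List.cons.injEq, List.length_cons]
      constructor
      · rintro (h | ⟨y, s, hs, rfl, rfl⟩)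
        · exact absurd h (by simp)
        · exact Nat.succ_le_succ ((ih s).1 hs)
      · intro h
        exact Or.inr ⟨x, t, (ih t).2 (Nat.le_of_succ_le_succ h), rfl, rfl⟩

/-! ### Nat.card bridge -/

lemma natCard_eq_filter_card {p : List SStep → Prop} [DecidablePred p]
    (s : Finset (List SStep)) (h : ∀ L, p L → L ∈ s) :
    Nat.card {L : List SStep // p L} = (s.filter p).card := by
  have e : {L : List SStep // p L} ≃ {L : List SStep // L ∈ s.filter p} :=
    ⟨fun x => ⟨x.1, Finset.mem_filter.2 ⟨h x.1 x.2, x.2⟩⟩,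
     fun x => ⟨x.1, (Finset.mem_filter.1 x.2).2⟩,
     fun x => rfl, fun x => rfl⟩
  rw [Nat.card_congr e, Nat.card_eq_finsetCard]

/-! ### the class finsets -/

def cls (P : List SStep → Prop) [DecidablePred P] (n : ℕ) : Finset (List SStep) :=
  (listsUpTo (2*n)).filter (fun L => IsSchroder L n ∧ P L)

lemma mem_cls {P : List SStep → Prop} [DecidablePred P] {n : ℕ} {L : List SStep} :
    L ∈ cls P n ↔ IsSchroder L n ∧ P L := by
  unfold cls
  rw [Finset.mem_filter]
  constructor
  · exact fun h => h.2
  · intro h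
    refine ⟨(mem_listsUpTo _ _).2 ?_, h⟩
    calc L.length ≤ (L.map SStep.len).sum := length_le_lenSum L
    _ = 2 * n := h.1.1


/-! ### the composition map -/

def comp (a b : List SStep) : List SStep := SStep.U :: (a ++ SStep.D :: b)

lemma comp_eq_append (a b : List SStep) :
    comp a b = (SStep.U :: a ++ [SStep.D]) ++ b := by
  simp [comp]

lemma comp_length (a b : List SStep) : (comp a b).length = a.length + 2 + b.length := by
  simp [comp]; omega

lemma comp_get_zero (a b : List SStep) : (comp a b)[0]? = some SStep.U := by
  simp [comp]

lemma comp_get_left (a b : List SStep) {i : ℕ} (h : i < a.length) :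
    (comp a b)[i+1]? = a[i]? := by
  simp only [comp, List.getElem?_cons_succ]
  rw [List.getElem?_append, if_pos h]

lemma comp_get_mid (a b : List SStep) : (comp a b)[a.length + 1]? = some SStep.D := by
  show (SStep.U :: (a ++ SStep.D :: b))[a.length + 1]? = _
  rw [List.getElem?_cons_succ, List.getElem?_append_right (le_refl _)]
  simp

lemma comp_get_right (a b : List SStep) (i : ℕ) :
    (comp a b)[a.length + 2 + i]? = b[i]? := by
  have : a.length + 2 + i = (a.length + 1 + i) + 1 := by omega
  rw [this]
  simp only [comp, List.getElem?_cons_succ]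
  rw [List.getElem?_append_right (by omega : a.length ≤ a.length + 1 + i)]
  have : a.length + 1 + i - a.length = i + 1 := by omega
  rw [this]
  simp

lemma comp_height_zero (a b : List SStep) : sHeight (comp a b) 0 = 0 := rfl

lemma comp_height_left (a b : List SStep) {i : ℕ} (h : i ≤ a.length) :
    sHeight (comp a b) (i+1) = 1 + sHeight a i := by
  unfold comp
  rw [sHeight_cons]
  have : sHeight (a ++ SStep.D :: b) i = sHeight a i := sHeight_append_left a _ h
  rw [this]
  simp [SStep.eff]

lemma comp_height_right (a b : List SStep) (ha : (a.map SStep.eff).sum = 0) (i : ℕ) :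
    sHeight (comp a b) (a.length + 2 + i) = sHeight b i := by
  rw [comp_eq_append]
  have hl : (SStep.U :: a ++ [SStep.D]).length = a.length + 2 := by simp
  have : a.length + 2 + i = (SStep.U :: a ++ [SStep.D]).length + i := by rw [hl]
  rw [this, sHeight_append_right]
  simp [ha, SStep.eff]

/-! ### basic facts about Schroder paths -/

lemma schroder_head_ne_D {a : List SStep} {p : ℕ} (ha : IsSchroder a p) :
    a[0]? ≠ some SStep.D := by
  intro h
  have hlt : 0 < a.length := by
    by_contra hc
    rw [List.getElem?_eq_none_iff.2 (by omega)] at h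
    exact absurd h (by simp)
  have := ha.2.2 1
  rw [sHeight_succ a 0 hlt] at this
  have hg : a.get ⟨0, hlt⟩ = SStep.D := by
    rw [List.getElem?_eq_getElem hlt] at h
    exact Option.some.inj h
  rw [hg] at this
  simp [sHeight_zero, SStep.eff] at this

lemma schroder_last_ne_U {a : List SStep} {p : ℕ} (ha : IsSchroder a p)
    {i : ℕ} (hi : i + 1 = a.length) : a[i]? ≠ some SStep.U := by
  intro h
  have hlt : i < a.length := by omega
  have hend : sHeight a (i+1) = 0 := by
    rw [hi, sHeight_of_ge a (le_refl _), ha.2.1]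
  rw [sHeight_succ a i hlt] at hend
  have hg : a.get ⟨i, hlt⟩ = SStep.U := by
    rw [List.getElem?_eq_getElem hlt] at h
    exact Option.some.inj h
  rw [hg] at hend
  have := ha.2.2 i
  simp [SStep.eff] at hend
  omega

lemma schroder_nil_iff {n : ℕ} : IsSchroder [] n ↔ n = 0 := by
  constructor
  · intro h
    have := h.1
    simp at this
    omega
  · rintro rfl
    exact ⟨by simp, by simp, fun i => by rw [sHeight_nil]⟩

lemma schroder_ne_nil {L : List SStep} {n : ℕ} (h : IsSchroder L n) (hn : 1 ≤ n) :
    L ≠ [] := by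
  rintro rfl
  rw [schroder_nil_iff] at h
  omega

lemma lenSum_even {L : List SStep} (h : (L.map SStep.eff).sum = 0) :
    2 ∣ (L.map SStep.len).sum := by
  have key : ∀ M : List SStep, ((M.map SStep.len).sum : ℤ) % 2 = ((M.map SStep.eff).sum) % 2 := by
    intro M
    induction M with
    | nil => simp
    | cons x t ih =>
      simp only [List.map_cons, List.sum_cons, Nat.cast_add]
      cases x <;> simp only [SStep.len, SStep.eff, Nat.cast_one, Nat.cast_ofNat] <;> omega
  have h2 : ((L.map SStep.len).sum : ℤ) % 2 = 0 := by rw [key L, h]; rfl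
  omega


lemma isSchroder_comp {a b : List SStep} {p q : ℕ} (ha : IsSchroder a p) (hb : IsSchroder b q) :
    IsSchroder (comp a b) (p + q + 1) := by
  obtain ⟨hal, hae, hah⟩ := ha
  obtain ⟨hbl, hbe, hbh⟩ := hb
  refine ⟨?_, ?_, ?_⟩
  · simp [comp, SStep.len, hal, hbl]; ring
  · simp [comp, SStep.eff, hae, hbe]
  · intro i
    match i with
    | 0 => rw [comp_height_zero]
    | (i+1) =>
      rcases le_or_gt i a.length with h | h
      · rw [comp_height_left a b h]
        have := hah i
        omega
      · have he : i + 1 = a.length + 2 + (i - a.length - 1) := by omega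
        rw [he, comp_height_right a b hae]
        exact hbh _

lemma comp_inj {a b a' b' : List SStep} {p p' : ℕ}
    (ha : IsSchroder a p) (ha' : IsSchroder a' p')
    (h : comp a b = comp a' b') : a = a' ∧ b = b' := by
  have key : ∀ (x y x' y' : List SStep) (px px' : ℕ), IsSchroder x px → IsSchroder x' px' →
      comp x y = comp x' y' → ¬ (x.length < x'.length) := by
    intro x y x' y' px px' hx hx' he hlt
    have h1 : sHeight (comp x y) (x.length + 2 + 0) = sHeight y 0 := comp_height_right x y hx.2.1 0
    have h2 : sHeight (comp x' y') ((x.length + 1) + 1) = 1 + sHeight x' (x.length + 1) :=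
      comp_height_left x' y' (by omega)
    rw [he] at h1
    have he2 : (x.length + 1) + 1 = x.length + 2 + 0 := by omega
    rw [he2, h1, sHeight_zero] at h2
    have := hx'.2.2 (x.length + 1)
    omega
  have hlen : a.length = a'.length := by
    rcases lt_trichotomy a.length a'.length with hl | hl | hl
    · exact absurd hl (key a b a' b' _ _ ha ha' h)
    · exact hl
    · exact absurd hl (key a' b' a b _ _ ha' ha h.symm)
  have h2 : a ++ SStep.D :: b = a' ++ SStep.D :: b' := by
    have h3 := h
    unfold comp at h3
    exact (List.cons.injEq _ _ _ _ ▸ h3).2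
  obtain ⟨e1, e2⟩ := List.append_inj h2 hlen
  exact ⟨e1, (List.cons.injEq _ _ _ _ ▸ e2).2⟩

lemma exists_comp {L : List SStep} {n : ℕ} (hL : IsSchroder L n) (hn : 1 ≤ n)
    (hU : L[0]? = some SStep.U) :
    ∃ a b p q, L = comp a b ∧ IsSchroder a p ∧ IsSchroder b q ∧ n = p + q + 1 := by
  have hlen : 1 ≤ L.length := by
    rcases L with _ | ⟨x, t⟩
    · exact absurd rfl (schroder_ne_nil hL hn)
    · simp
  -- the first element is U; write L = U :: M
  obtain ⟨M, rfl⟩ : ∃ M, L = SStep.U :: M := by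
    rcases L with _ | ⟨x, t⟩
    · exact absurd rfl (schroder_ne_nil hL hn)
    · have : x = SStep.U := by
        have h0 : (x :: t)[0]? = some x := by simp
        rw [h0] at hU
        exact Option.some.inj hU
      exact ⟨t, by rw [this]⟩
  set L := SStep.U :: M with hLdef
  -- find the first return to zero
  have hex : ∃ k, 1 ≤ k ∧ k ≤ L.length ∧ sHeight L k = 0 :=
    ⟨L.length, hlen, le_refl _, by rw [sHeight_of_ge L (le_refl _), hL.2.1]⟩
  obtain ⟨k, ⟨hk1, hkle, hk0⟩, hmin⟩ : ∃ k, (1 ≤ k ∧ k ≤ L.length ∧ sHeight L k = 0) ∧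
      ∀ j < k, ¬(1 ≤ j ∧ j ≤ L.length ∧ sHeight L j = 0) :=
    ⟨Nat.find hex, Nat.find_spec hex, fun j hj => Nat.find_min hex hj⟩
  have hLM : L.length = M.length + 1 := by rw [hLdef]; simp
  have hpos : ∀ j, 1 ≤ j → j < k → 0 < sHeight L j := by
    intro j hj1 hjk
    have hns := hmin j hjk
    have hj2 : j ≤ L.length := by omega
    have := hL.2.2 j
    rcases this.lt_or_eq with h | h
    · exact h
    · exact absurd ⟨hj1, hj2, h.symm⟩ hns
  have hH1 : sHeight L 1 = 1 := by
    rw [hLdef, sHeight_cons, sHeight_zero]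
    simp [SStep.eff]
  have hk2 : 2 ≤ k := by
    by_contra hcon
    have hke : k = 1 := by omega
    rw [hke, hH1] at hk0
    norm_num at hk0
  -- the step just before the first return is D, from height 1
  have hk1lt : k - 1 < L.length := by omega
  have hstep : L.get ⟨k-1, hk1lt⟩ = SStep.D ∧ sHeight L (k-1) = 1 := by
    have hsucc := sHeight_succ L (k-1) hk1lt
    have hke : (k-1) + 1 = k := by omega
    rw [hke, hk0] at hsucc
    have hp := hpos (k-1) (by omega) (by omega)
    rcases hg : L.get ⟨k-1, hk1lt⟩ with _ | _ | _ <;> rw [hg] at hsucc <;>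
      norm_num [SStep.eff] at hsucc
    · omega
    · exact ⟨rfl, by omega⟩
    · omega
  set a := M.take (k-2) with hadef
  set b := M.drop (k-1) with hbdef
  have hMlen : k - 2 < M.length := by omega
  have hMget : M[k-2]'hMlen = SStep.D := by
    have h1 : L[k-1]? = some SStep.D := by
      rw [List.getElem?_eq_getElem hk1lt]
      exact congrArg some hstep.1
    rw [hLdef] at h1
    rw [show k - 1 = (k-2)+1 by omega] at h1
    rw [List.getElem?_cons_succ, List.getElem?_eq_getElem hMlen] at h1
    exact Option.some.inj h1
  have hcomp : L = comp a b := by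
    rw [hLdef, comp]
    congr 1
    have h1 : M = M.take (k-2) ++ M.drop (k-2) := (List.take_append_drop _ _).symm
    have hke2 : k - 2 + 1 = k - 1 := by omega
    have h2 : M.drop (k-2) = SStep.D :: M.drop (k-1) := by
      rw [List.drop_eq_getElem_cons hMlen, hMget, hke2]
    rw [← hbdef] at h2
    conv_lhs => rw [h1, h2]
  have halen : a.length = k - 2 := by
    rw [hadef, List.length_take]
    omega
  -- heights inside a
  have haheight : ∀ i, i ≤ a.length → sHeight a i = sHeight L (i+1) - 1 := by
    intro i hi
    have := comp_height_left a b hi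
    rw [← hcomp] at this
    omega
  have hae : (a.map SStep.eff).sum = 0 := by
    have h1 := haheight a.length (le_refl _)
    rw [sHeight_of_ge a (le_refl _)] at h1
    have he : a.length + 1 = k - 1 := by omega
    rw [he, hstep.2] at h1
    omega
  have hah : ∀ i, 0 ≤ sHeight a i := by
    intro i
    rcases le_or_gt i a.length with h | h
    · rw [haheight i h]
      have := hpos (i+1) (by omega) (by omega)
      omega
    · rw [sHeight_of_ge a (le_of_lt h), hae]
  have hbe : (b.map SStep.eff).sum = 0 := by
    have h1 := hL.2.1
    rw [hcomp] at h1
    simp [comp, SStep.eff, hae] at h1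
    linarith
  have hbh : ∀ i, 0 ≤ sHeight b i := by
    intro i
    have := comp_height_right a b hae i
    rw [← hcomp] at this
    rw [← this]
    exact hL.2.2 _
  obtain ⟨p, hp⟩ := lenSum_even hae
  obtain ⟨q, hq⟩ := lenSum_even hbe
  refine ⟨a, b, p, q, hcomp, ⟨hp, hae, hah⟩, ⟨hq, hbe, hbh⟩, ?_⟩
  have hlsum := hL.1
  rw [hcomp] at hlsum
  simp [comp, SStep.len] at hlsum
  rw [hp, hq] at hlsum
  omega


/-! ### generic pattern predicates -/

def Pred (s : SStep) (Q : ℤ → Prop) (L : List SStep) : Prop :=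
  ∀ i, L[i]? = some SStep.U → L[i+1]? = some s → Q (sHeight L (i+1))

lemma noOddPeak_eq_pred (L : List SStep) :
    NoOddPeak L ↔ Pred SStep.D (fun h => ¬ Odd h) L := by
  constructor
  · exact fun h i h1 h2 => h i ⟨h1, h2⟩
  · exact fun h i hp => h i hp.1 hp.2

lemma noEvenPeak_eq_pred (L : List SStep) :
    NoEvenPeak L ↔ Pred SStep.D (fun h => ¬ Even h) L := by
  constructor
  · exact fun h i h1 h2 => h i ⟨h1, h2⟩
  · exact fun h i hp => h i hp.1 hp.2

lemma uhFree_eq_pred (L : List SStep) :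
    UHFree L ↔ Pred SStep.H (fun _ => False) L := by
  constructor
  · exact fun h i h1 h2 => h i ⟨h1, h2⟩
  · exact fun h i hp => h i hp.1 hp.2

lemma pred_congr {s : SStep} {Q Q' : ℤ → Prop} (h : ∀ x, Q x ↔ Q' x) {L : List SStep} :
    Pred s Q L ↔ Pred s Q' L := by
  constructor
  · exact fun hp i h1 h2 => (h _).mp (hp i h1 h2)
  · exact fun hp i h1 h2 => (h _).mpr (hp i h1 h2)

lemma pred_cons_H (s : SStep) (Q : ℤ → Prop) (t : List SStep) :
    Pred s Q (SStep.H :: t) ↔ Pred s Q t := by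
  constructor
  · intro h i h1 h2
    have := h (i+1) (by rwa [List.getElem?_cons_succ]) (by rwa [List.getElem?_cons_succ])
    rwa [sHeight_cons, show SStep.eff SStep.H = 0 from rfl, zero_add] at this
  · intro h i h1 h2
    match i with
    | 0 => simp at h1
    | (i+1) =>
      rw [List.getElem?_cons_succ] at h1 h2
      rw [sHeight_cons, show SStep.eff SStep.H = 0 from rfl, zero_add]
      exact h i h1 h2

lemma pred_comp (s : SStep) (Q : ℤ → Prop) {a b : List SStep} {p q : ℕ}
    (ha : IsSchroder a p) (hb : IsSchroder b q) :
    Pred s Q (comp a b) ↔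
      (Pred s (fun h => Q (1 + h)) a ∧ Pred s Q b ∧
        (a = [] → s = SStep.D → Q 1) ∧ (a[0]? = some s → Q 1)) := by
  constructor
  · intro h
    refine ⟨?_, ?_, ?_, ?_⟩
    · intro i h1 h2
      have hi1 : i + 1 < a.length := by
        by_contra hc
        rw [List.getElem?_eq_none_iff.2 (by omega)] at h2
        exact absurd h2 (by simp)
      have := h (i+1) (by rwa [comp_get_left a b (by omega)]) (by rwa [comp_get_left a b hi1])
      rwa [comp_height_left a b (by omega)] at this
    · intro i h1 h2
      have := h (a.length + 2 + i) (by rwa [comp_get_right]) (by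
        rw [show a.length + 2 + i + 1 = a.length + 2 + (i+1) by omega, comp_get_right]; exact h2)
      rwa [show a.length + 2 + i + 1 = a.length + 2 + (i+1) by omega,
        comp_height_right a b ha.2.1] at this
    · rintro rfl rfl
      have := h 0 (comp_get_zero _ _) (by
        have := comp_get_mid ([] : List SStep) b
        simpa using this)
      rwa [comp_height_left _ b (by simp), sHeight_nil] at this
    · intro h0
      have hlen : 0 < a.length := by
        by_contra hc
        rw [List.getElem?_eq_none_iff.2 (by omega)] at h0
        exact absurd h0 (by simp)
      have := h 0 (comp_get_zero _ _) (by rwa [comp_get_left a b hlen])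
      rwa [comp_height_left a b (by omega), sHeight_zero] at this
  · rintro ⟨hA, hB, hE, hN⟩ t h1 h2
    match t with
    | 0 =>
      rcases Decidable.em (a = []) with rfl | hne
      · have hmid := comp_get_mid ([] : List SStep) b
        simp only [List.length_nil, zero_add] at hmid
        rw [hmid] at h2
        have hs : s = SStep.D := (Option.some.inj h2).symm
        have := hE rfl hs
        rwa [comp_height_left _ b (by simp), sHeight_nil]
      · have hlen : 0 < a.length := List.length_pos_iff.2 hne
        rw [comp_get_left a b hlen] at h2
        have := hN h2
        rwa [comp_height_left a b (by omega), sHeight_zero]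
    | (i+1) =>
      rcases Nat.lt_trichotomy (i+1) a.length with hlt | heq | hgt
      · rw [comp_get_left a b (by omega)] at h1
        rw [comp_get_left a b hlt] at h2
        rw [comp_height_left a b (by omega)]
        exact hA i h1 h2
      · rw [comp_get_left a b (by omega)] at h1
        exact absurd h1 (schroder_last_ne_U ha heq)
      · rcases Nat.lt_trichotomy i a.length with h' | h' | h'
        · -- i+1 > a.length and i < a.length: impossible
          omega
        · -- i = a.length : position is the closing D
          rw [h'] at h1
          rw [comp_get_mid a b] at h1
          exact absurd (Option.some.inj h1) (by intro hcon; exact SStep.noConfusion hcon)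
        · -- inside b
          obtain ⟨j, rfl⟩ : ∃ j, i = a.length + 1 + j := ⟨i - a.length - 1, by omega⟩
          have e1 : a.length + 1 + j + 1 = a.length + 2 + j := by omega
          have e2 : a.length + 1 + j + 1 + 1 = a.length + 2 + (j + 1) := by omega
          rw [e1, comp_get_right] at h1
          rw [e2, comp_get_right] at h2
          rw [e1]
          rw [show a.length + 2 + j + 1 = a.length + 2 + (j+1) by omega,
            comp_height_right a b ha.2.1]
          exact hB j h1 h2


/-! ### per-class transfer lemmas -/

lemma schroder_head {a : List SStep} {p : ℕ} (ha : IsSchroder a p) :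
    a = [] ∨ a[0]? = some SStep.U ∨ a[0]? = some SStep.H := by
  rcases a with _ | ⟨x, t⟩
  · exact Or.inl rfl
  · right
    have h0 : (x :: t)[0]? = some x := by simp
    cases x
    · exact Or.inl h0
    · exact absurd h0 (schroder_head_ne_D ha)
    · exact Or.inr h0

lemma odd_one_int : Odd (1 : ℤ) := ⟨0, by ring⟩

lemma noOddPeak_comp {a b : List SStep} {p q : ℕ} (ha : IsSchroder a p) (hb : IsSchroder b q) :
    NoOddPeak (comp a b) ↔ (a ≠ [] ∧ NoEvenPeak a ∧ NoOddPeak b) := by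
  rw [noOddPeak_eq_pred, pred_comp _ _ ha hb,
    pred_congr (show ∀ x : ℤ, (¬ Odd (1 + x)) ↔ ¬ Even x by
      intro x
      rw [add_comm, Int.not_odd_iff_even, Int.even_add_one]),
    ← noEvenPeak_eq_pred, ← noOddPeak_eq_pred]
  constructor
  · rintro ⟨h1, h2, h3, h4⟩
    refine ⟨fun he => (h3 he rfl) odd_one_int, h1, h2⟩
  · rintro ⟨h1, h2, h3⟩
    exact ⟨h2, h3, fun he => absurd he h1, fun hd => absurd hd (schroder_head_ne_D ha)⟩

lemma noEvenPeak_comp {a b : List SStep} {p q : ℕ} (ha : IsSchroder a p) (hb : IsSchroder b q) :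
    NoEvenPeak (comp a b) ↔ (NoOddPeak a ∧ NoEvenPeak b) := by
  rw [noEvenPeak_eq_pred, pred_comp _ _ ha hb,
    pred_congr (show ∀ x : ℤ, (¬ Even (1 + x)) ↔ ¬ Odd x by
      intro x
      rw [add_comm, Int.even_add_one, not_not, ← Int.not_odd_iff_even]),
    ← noOddPeak_eq_pred, ← noEvenPeak_eq_pred]
  constructor
  · rintro ⟨h1, h2, h3, h4⟩
    exact ⟨h1, h2⟩
  · rintro ⟨h1, h2⟩
    refine ⟨h1, h2, fun _ _ => ?_, fun _ => ?_⟩ <;>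
      (intro hcon; exact (by decide : ¬ (1 : ℤ) % 2 = 0) (Int.even_iff.1 hcon))

lemma uhFree_comp {a b : List SStep} {p q : ℕ} (ha : IsSchroder a p) (hb : IsSchroder b q) :
    UHFree (comp a b) ↔ (UHFree a ∧ UHFree b ∧ ¬ (a[0]? = some SStep.H)) := by
  rw [uhFree_eq_pred, pred_comp _ _ ha hb, ← uhFree_eq_pred, ← uhFree_eq_pred]
  constructor
  · rintro ⟨h1, h2, h3, h4⟩
    exact ⟨h1, h2, h4⟩
  · rintro ⟨h1, h2, h3⟩
    exact ⟨h1, h2, fun _ hc => SStep.noConfusion hc, h3⟩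

lemma isSchroder_cons_H {t : List SStep} {m : ℕ} :
    IsSchroder (SStep.H :: t) (m + 1) ↔ IsSchroder t m := by
  constructor
  · rintro ⟨h1, h2, h3⟩
    refine ⟨?_, ?_, ?_⟩
    · simp [SStep.len] at h1; omega
    · simpa [SStep.eff] using h2
    · intro i
      have := h3 (i+1)
      rwa [sHeight_cons, show SStep.eff SStep.H = 0 from rfl, zero_add] at this
  · rintro ⟨h1, h2, h3⟩
    refine ⟨?_, ?_, ?_⟩
    · simp [SStep.len, h1]; ring
    · simpa [SStep.eff] using h2
    · intro i
      match i with
      | 0 => rw [sHeight_zero]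
      | (i+1) =>
        rw [sHeight_cons, show SStep.eff SStep.H = 0 from rfl, zero_add]
        exact h3 i

lemma noOddPeak_cons_H (t : List SStep) : NoOddPeak (SStep.H :: t) ↔ NoOddPeak t := by
  rw [noOddPeak_eq_pred, pred_cons_H, ← noOddPeak_eq_pred]

lemma noEvenPeak_cons_H (t : List SStep) : NoEvenPeak (SStep.H :: t) ↔ NoEvenPeak t := by
  rw [noEvenPeak_eq_pred, pred_cons_H, ← noEvenPeak_eq_pred]

lemma uhFree_cons_H (t : List SStep) : UHFree (SStep.H :: t) ↔ UHFree t := by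
  rw [uhFree_eq_pred, pred_cons_H, ← uhFree_eq_pred]


/-! ### the master recurrence -/

lemma lenSum_eq_zero {L : List SStep} (h : (L.map SStep.len).sum = 0) : L = [] := by
  have := length_le_lenSum L
  rw [h] at this
  exact List.length_eq_zero_iff.1 (by omega)

lemma master (P P' Q R : List SStep → Prop)
    [DecidablePred P] [DecidablePred P'] [DecidablePred Q] [DecidablePred R]
    (m : ℕ)
    (hH : ∀ t : List SStep, P (SStep.H :: t) ↔ P' t)
    (hcomp : ∀ (a b : List SStep) (p q : ℕ), IsSchroder a p → IsSchroder b q →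
      (P (comp a b) ↔ Q a ∧ R b)) :
    (cls P (m+1)).card = (cls P' m).card +
      ∑ p ∈ Finset.range (m+1), (cls Q p).card * (cls R (m-p)).card := by
  classical
  set XH : Finset (List SStep) := (cls P' m).image (fun t => SStep.H :: t) with hXH
  set XU : Finset (List SStep) := (Finset.range (m+1)).biUnion
    (fun p => ((cls Q p) ×ˢ (cls R (m-p))).image (fun x => comp x.1 x.2)) with hXU
  have hset : cls P (m+1) = XH ∪ XU := by
    ext L
    rw [mem_cls, Finset.mem_union]
    constructor
    · rintro ⟨hS, hP⟩
      rcases schroder_head hS with rfl | hU | hHd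
      · exact absurd (schroder_nil_iff.1 hS) (by omega)
      · -- starts with U : decompose
        obtain ⟨a, b, p, q, rfl, hap, hbq, hpq⟩ := exists_comp hS (by omega) hU
        right
        rw [hXU, Finset.mem_biUnion]
        refine ⟨p, Finset.mem_range.2 (by omega), ?_⟩
        rw [Finset.mem_image]
        refine ⟨(a, b), ?_, rfl⟩
        rw [Finset.mem_product]
        have hq : q = m - p := by omega
        exact ⟨mem_cls.2 ⟨hap, ((hcomp a b p q hap hbq).1 hP).1⟩,
          mem_cls.2 ⟨hq ▸ hbq, ((hcomp a b p q hap hbq).1 hP).2⟩⟩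
      · -- starts with H
        left
        rcases L with _ | ⟨x, t⟩
        · simp at hHd
        · have hx : x = SStep.H := by
            have h0 : (x :: t)[0]? = some x := by simp
            rw [h0] at hHd
            exact Option.some.inj hHd
          subst hx
          rw [hXH, Finset.mem_image]
          exact ⟨t, mem_cls.2 ⟨isSchroder_cons_H.1 hS, (hH t).1 hP⟩, rfl⟩
    · rintro (hL | hL)
      · rw [hXH, Finset.mem_image] at hL
        obtain ⟨t, ht, rfl⟩ := hL
        rw [mem_cls] at ht
        exact ⟨isSchroder_cons_H.2 ht.1, (hH t).2 ht.2⟩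
      · rw [hXU, Finset.mem_biUnion] at hL
        obtain ⟨p, hp, hL⟩ := hL
        rw [Finset.mem_image] at hL
        obtain ⟨⟨a, b⟩, hab, rfl⟩ := hL
        rw [Finset.mem_product, mem_cls, mem_cls] at hab
        have hS : IsSchroder (comp a b) (p + (m - p) + 1) := isSchroder_comp hab.1.1 hab.2.1
        have hpe : p + (m - p) + 1 = m + 1 := by
          rw [Finset.mem_range] at hp
          omega
        rw [hpe] at hS
        exact ⟨hS, (hcomp a b p (m-p) hab.1.1 hab.2.1).2 ⟨hab.1.2, hab.2.2⟩⟩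
  have hdisj : Disjoint XH XU := by
    rw [Finset.disjoint_left]
    intro L hL1 hL2
    rw [hXH, Finset.mem_image] at hL1
    obtain ⟨t, _, rfl⟩ := hL1
    rw [hXU, Finset.mem_biUnion] at hL2
    obtain ⟨p, _, hL2⟩ := hL2
    rw [Finset.mem_image] at hL2
    obtain ⟨⟨a, b⟩, _, hc⟩ := hL2
    unfold comp at hc
    exact SStep.noConfusion (List.cons.injEq .. ▸ hc).1
  rw [hset, Finset.card_union_of_disjoint hdisj]
  congr 1
  · rw [hXH]
    exact Finset.card_image_of_injective _ (fun x y h => (List.cons.injEq .. ▸ h).2)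
  · rw [hXU]
    rw [Finset.card_biUnion]
    · apply Finset.sum_congr rfl
      intro p _
      rw [Finset.card_image_of_injOn, Finset.card_product]
      rintro ⟨a, b⟩ hab ⟨a', b'⟩ hab' hc
      simp only [Finset.mem_coe, Finset.mem_product, mem_cls] at hab hab'
      obtain ⟨e1, e2⟩ := comp_inj hab.1.1 hab'.1.1 hc
      rw [Prod.mk.injEq]
      exact ⟨e1, e2⟩
    · intro p hp p' hp' hne
      rw [Function.onFun, Finset.disjoint_left]
      intro L hL1 hL2
      rw [Finset.mem_image] at hL1 hL2
      obtain ⟨⟨a, b⟩, hab, rfl⟩ := hL1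
      obtain ⟨⟨a', b'⟩, hab', hc⟩ := hL2
      rw [Finset.mem_product, mem_cls, mem_cls] at hab hab'
      obtain ⟨e1, e2⟩ := comp_inj hab'.1.1 hab.1.1 hc
      subst e1
      have k1 := hab.1.1.1
      have k2 := hab'.1.1.1
      rw [k1] at k2
      exact hne (by omega)


/-! ### base cases -/

lemma noOddPeak_nil : NoOddPeak [] := by
  intro i hp
  simp [IsPeakAt] at hp

lemma noEvenPeak_nil : NoEvenPeak [] := by
  intro i hp
  simp [IsPeakAt] at hp

lemma uhFree_nil : UHFree [] := by
  intro i hp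
  simp at hp

lemma cls_zero_of_holds {P : List SStep → Prop} [DecidablePred P] (hP : P []) :
    cls P 0 = {[]} := by
  ext L
  rw [mem_cls, Finset.mem_singleton]
  constructor
  · rintro ⟨hS, -⟩
    exact lenSum_eq_zero (by rw [hS.1])
  · rintro rfl
    exact ⟨schroder_nil_iff.2 rfl, hP⟩

lemma cls_zero_of_not {P : List SStep → Prop} [DecidablePred P] (hP : ¬ P []) :
    cls P 0 = ∅ := by
  ext L
  rw [mem_cls]
  simp only [Finset.notMem_empty, iff_false]
  rintro ⟨hS, hL⟩
  have : L = [] := lenSum_eq_zero (by rw [hS.1])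
  subst this
  exact hP hL

lemma cls_false (P : List SStep → Prop) [DecidablePred P] (hP : ∀ L, ¬ P L) (n : ℕ) :
    cls P n = ∅ := by
  ext L
  rw [mem_cls]
  simp only [Finset.notMem_empty, iff_false]
  rintro ⟨-, hL⟩
  exact hP L hL

/-! ### the four class predicates -/

def PB (L : List SStep) : Prop := UHFree L ∧ L[0]? = some SStep.U
def QB (L : List SStep) : Prop := UHFree L ∧ (L = [] ∨ L[0]? = some SStep.U)
def QE (L : List SStep) : Prop := L ≠ [] ∧ NoEvenPeak L

instance : DecidablePred PB := fun L => by unfold PB; infer_instance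
instance : DecidablePred QB := fun L => by unfold QB; infer_instance
instance : DecidablePred QE := fun L => by unfold QE; infer_instance

lemma head_not_H_iff {a : List SStep} {p : ℕ} (ha : IsSchroder a p) :
    ¬ (a[0]? = some SStep.H) ↔ (a = [] ∨ a[0]? = some SStep.U) := by
  constructor
  · intro h
    rcases schroder_head ha with h' | h' | h'
    · exact Or.inl h'
    · exact Or.inr h'
    · exact absurd h' h
  · rintro (rfl | h) hc
    · simp at hc
    · rw [h] at hc
      exact SStep.noConfusion (Option.some.inj hc)

/-! ### the recurrences -/

lemma rec_A (m : ℕ) :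
    (cls NoOddPeak (m+1)).card = (cls NoOddPeak m).card +
      ∑ p ∈ Finset.range (m+1), (cls QE p).card * (cls NoOddPeak (m-p)).card :=
  master _ _ _ _ m noOddPeak_cons_H (fun a b p q ha hb => by
    rw [noOddPeak_comp ha hb]
    unfold QE
    tauto)

lemma rec_E (m : ℕ) :
    (cls NoEvenPeak (m+1)).card = (cls NoEvenPeak m).card +
      ∑ p ∈ Finset.range (m+1), (cls NoOddPeak p).card * (cls NoEvenPeak (m-p)).card :=
  master _ _ _ _ m noEvenPeak_cons_H (fun a b p q ha hb => noEvenPeak_comp ha hb)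

lemma rec_C (m : ℕ) :
    (cls UHFree (m+1)).card = (cls UHFree m).card +
      ∑ p ∈ Finset.range (m+1), (cls QB p).card * (cls UHFree (m-p)).card :=
  master _ _ _ _ m uhFree_cons_H (fun a b p q ha hb => by
    rw [uhFree_comp ha hb, head_not_H_iff ha]
    unfold QB
    tauto)

lemma rec_B (m : ℕ) :
    (cls PB (m+1)).card = 0 +
      ∑ p ∈ Finset.range (m+1), (cls QB p).card * (cls UHFree (m-p)).card := by
  have h := master PB (fun _ => False) QB UHFree m
    (fun t => by
      unfold PB
      constructor
      · rintro ⟨-, hc⟩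
        have h0 : (SStep.H :: t)[0]? = some SStep.H := by simp
        rw [h0] at hc
        exact SStep.noConfusion (Option.some.inj hc)
      · exact fun h => h.elim)
    (fun a b p q ha hb => by
      unfold PB
      rw [uhFree_comp ha hb, head_not_H_iff ha]
      have hU : (comp a b)[0]? = some SStep.U := comp_get_zero a b
      unfold QB
      tauto)
  rw [h, cls_false _ (fun L h => h) m, Finset.card_empty]

/-! ### auxiliary card identities -/

lemma card_QB (p : ℕ) : (cls QB p).card = (cls PB p).card + (if p = 0 then 1 else 0) := by
  rcases Nat.eq_zero_or_pos p with rfl | hp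
  · rw [cls_zero_of_holds (P := QB) ⟨uhFree_nil, Or.inl rfl⟩,
      cls_zero_of_not (P := PB) (by rintro ⟨-, hc⟩; simp at hc)]
    simp
  · rw [if_neg (by omega)]
    congr 1
    apply Finset.filter_congr
    intro L hL
    rw [mem_listsUpTo] at hL
    unfold QB PB
    constructor
    · rintro ⟨hS, h1, (rfl | h2)⟩
      · exact absurd (schroder_nil_iff.1 hS) (by omega)
      · exact ⟨hS, h1, h2⟩
    · rintro ⟨hS, h1, h2⟩
      exact ⟨hS, h1, Or.inr h2⟩

lemma card_QE (p : ℕ) (hp : 1 ≤ p) : (cls QE p).card = (cls NoEvenPeak p).card := by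
  congr 1
  apply Finset.filter_congr
  intro L hL
  unfold QE
  constructor
  · rintro ⟨hS, -, h2⟩
    exact ⟨hS, h2⟩
  · rintro ⟨hS, h2⟩
    exact ⟨hS, schroder_ne_nil hS hp, h2⟩

lemma card_QE_zero : (cls QE 0).card = 0 := by
  rw [cls_zero_of_not (P := QE) (by rintro ⟨hc, -⟩; exact hc rfl)]
  rfl

lemma card_A_zero : (cls NoOddPeak 0).card = 1 := by
  rw [cls_zero_of_holds noOddPeak_nil]; rfl

lemma card_E_zero : (cls NoEvenPeak 0).card = 1 := by
  rw [cls_zero_of_holds noEvenPeak_nil]; rfl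

lemma card_C_zero : (cls UHFree 0).card = 1 := by
  rw [cls_zero_of_holds uhFree_nil]; rfl

lemma card_B_zero : (cls PB 0).card = 0 := by
  rw [cls_zero_of_not (P := PB) (by rintro ⟨-, hc⟩; simp at hc)]; rfl


/-! ### the main induction -/

lemma main_induction : ∀ n : ℕ,
    (cls NoEvenPeak n).card = (cls UHFree n).card ∧
    (cls NoOddPeak n).card = (cls PB n).card + (if n = 0 then 1 else 0) := by
  intro n
  induction n using Nat.strong_induction_on with
  | _ n ih =>
    match n with
    | 0 =>
      refine ⟨?_, ?_⟩
      · rw [card_E_zero, card_C_zero]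
      · rw [card_A_zero, card_B_zero]; rfl
    | (m+1) =>
      have hE : (cls NoEvenPeak (m+1)).card = (cls UHFree (m+1)).card := by
        rw [rec_E, rec_C]
        congr 1
        · exact (ih m (by omega)).1
        · apply Finset.sum_congr rfl
          intro p hp
          rw [Finset.mem_range] at hp
          rw [(ih p (by omega)).2, (ih (m-p) (by omega)).1, ← card_QB]
      have hA : (cls NoOddPeak (m+1)).card = (cls PB (m+1)).card := by
        rw [rec_A, rec_B, zero_add]
        have step1 : (cls NoOddPeak m).card +
            ∑ p ∈ Finset.range (m+1), (cls QE p).card * (cls NoOddPeak (m-p)).card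
            = ∑ p ∈ Finset.range (m+1), (cls NoEvenPeak p).card * (cls NoOddPeak (m-p)).card := by
          rw [Finset.sum_range_succ'
              (fun p => (cls QE p).card * (cls NoOddPeak (m-p)).card) m,
            Finset.sum_range_succ'
              (fun p => (cls NoEvenPeak p).card * (cls NoOddPeak (m-p)).card) m]
          rw [card_QE_zero, card_E_zero]
          simp only [Nat.sub_zero]
          rw [Finset.sum_congr rfl (fun i (_ : i ∈ Finset.range m) => by
            rw [card_QE (i+1) (by omega)] :
            ∀ i ∈ Finset.range m, (cls QE (i+1)).card * (cls NoOddPeak (m-(i+1))).card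
              = (cls NoEvenPeak (i+1)).card * (cls NoOddPeak (m-(i+1))).card)]
          ring
        rw [step1]
        have step2 : ∑ p ∈ Finset.range (m+1),
              (cls NoEvenPeak p).card * (cls NoOddPeak (m-p)).card
            = ∑ p ∈ Finset.range (m+1), (cls UHFree p).card * (cls QB (m-p)).card := by
          apply Finset.sum_congr rfl
          intro p hp
          rw [Finset.mem_range] at hp
          rw [(ih p (by omega)).1, (ih (m-p) (by omega)).2, ← card_QB]
        rw [step2]
        rw [← Finset.sum_range_reflect
          (fun j => (cls QB j).card * (cls UHFree (m-j)).card) (m+1)]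
        apply Finset.sum_congr rfl
        intro p hp
        rw [Finset.mem_range] at hp
        have h1 : m + 1 - 1 - p = m - p := by omega
        have h2 : m - (m - p) = p := by omega
        rw [h1, h2, mul_comm]
      refine ⟨hE, ?_⟩
      rw [hA, if_neg (Nat.succ_ne_zero m)]
      omega

lemma natCard_cls (P : List SStep → Prop) [DecidablePred P] (n : ℕ) :
    Nat.card {L : List SStep // IsSchroder L n ∧ P L} = (cls P n).card := by
  rw [natCard_eq_filter_card (listsUpTo (2*n)) (fun L hL => (mem_listsUpTo _ _).2
    (le_trans (length_le_lenSum L) (le_of_eq hL.1.1)))]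
  unfold cls
  congr 1


lemma cls_PB_eq (n : ℕ) :
    cls (fun L => UHFree L ∧ L[0]? = some SStep.U) n = cls PB n := by
  unfold cls
  apply Finset.filter_congr
  intro L _
  unfold PB
  exact Iff.rfl

end SP

/-- For every integer `n ≥ 1`, the number of Schröder paths of length `2n` having no peak
of odd height equals the number of UH-free Schröder paths of length `2n` whose first
step is `U`. -/
theorem stmt2 (n : ℕ) (hn : 1 ≤ n) :
    Nat.card {L : List SStep // IsSchroder L n ∧ NoOddPeak L} =
    Nat.card {L : List SStep // IsSchroder L n ∧ UHFree L ∧ L[0]? = some SStep.U} := by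
  rw [SP.natCard_cls NoOddPeak n,
    SP.natCard_cls (fun L => UHFree L ∧ L[0]? = some SStep.U) n, SP.cls_PB_eq n]
  have h := (SP.main_induction n).2
  rw [if_neg (by omega), Nat.add_zero] at h
  exact h
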